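/- If R is an FGFC ring and S is an R-algebra which is finitely presented as an R-module, then S is an FGFC ring. -/

import Mathlib

set_option linter.unusedSectionVars false
set_option maxHeartbeats 1000000

open Matrix Function

namespace FGFCAux

variable {R : Type*} [CommRing R]

/-- The ideal generated by `k × k` minors of `A`. -/
noncomputable def minorsIdeal {n m : ℕ} (A : Matrix (Fin n) (Fin m) R) (k : ℕ) : Ideal R :=
  Ideal.span ((fun gh : (Fin k → Fin n) × (Fin k → Fin m) => (A.submatrix gh.1 gh.2).det) ''
    {gh | Function.Injective gh.1 ∧ Function.Injective gh.2})

lemma minorsIdeal_fg {n m : ℕ} (A : Matrix (Fin n) (Fin m) R) (k : ℕ) :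
    (minorsIdeal A k).FG :=
  Submodule.fg_span ((Set.toFinite _).image _)

variable {n m r : ℕ} (A : Matrix (Fin n) (Fin m) R)
  (g : Fin r → Fin n) (h : Fin r → Fin m)

/-- `g` extended by `i`. -/
def rowExt {N r : ℕ} (g : Fin r → Fin N) (i : Fin N) : Fin (r+1) → Fin N := Fin.snoc g i

@[simp] lemma rowExt_castSucc {N r : ℕ} (g : Fin r → Fin N) (i : Fin N) (k : Fin r) :
    rowExt g i (Fin.castSucc k) = g k := by simp [rowExt]

@[simp] lemma rowExt_last {N r : ℕ} (g : Fin r → Fin N) (i : Fin N) :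
    rowExt g i (Fin.last r) = i := by simp [rowExt]

/-- Augmented square matrix: rows `g` plus row `i`, columns `h` plus the vector `u`. -/
noncomputable def Baug (u : Fin n → R) (i : Fin n) : Matrix (Fin (r+1)) (Fin (r+1)) R :=
  Matrix.of fun k l =>
    (Fin.snoc (fun l' : Fin r => A (rowExt g i k) (h l')) (u (rowExt g i k)) : Fin (r+1) → R) l

lemma Baug_updateColumn (u u' : Fin n → R) (i : Fin n) :
    Baug A g h u' i =
      (Baug A g h u i).updateCol (Fin.last r) (fun k => u' (rowExt g i k)) := by
  ext k l
  induction l using Fin.lastCases with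
  | last => simp [Baug, Matrix.updateCol_apply]
  | cast l => simp [Baug, Matrix.updateCol_apply, (Fin.castSucc_lt_last l).ne]

lemma det_Baug_smul (c : R) (u : Fin n → R) (i : Fin n) :
    (Baug A g h (c • u) i).det = c * (Baug A g h u i).det := by
  rw [Baug_updateColumn A g h u (c • u) i,
    show (fun k => (c • u) (rowExt g i k)) = c • (fun k => u (rowExt g i k)) from rfl,
    Matrix.det_updateCol_smul, ← Baug_updateColumn A g h u u i]

lemma det_Baug_add (u u' : Fin n → R) (i : Fin n) :
    (Baug A g h (u + u') i).det = (Baug A g h u i).det + (Baug A g h u' i).det := by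
  rw [Baug_updateColumn A g h u (u + u') i,
    show (fun k => (u + u') (rowExt g i k))
      = (fun k => u (rowExt g i k)) + (fun k => u' (rowExt g i k)) from rfl,
    Matrix.det_updateCol_add, ← Baug_updateColumn A g h u u i,
    Baug_updateColumn A g h u u' i]

lemma det_Baug_zero (i : Fin n) : (Baug A g h (0 : Fin n → R) i).det = 0 := by
  apply Matrix.det_eq_zero_of_column_eq_zero (Fin.last r)
  intro k
  simp [Baug]

lemma det_Baug_sum (w : Fin m → R) (i : Fin n) :
    (Baug A g h (∑ j, w j • fun i' => A i' j) i).det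
      = ∑ j, w j * (Baug A g h (fun i' => A i' j) i).det := by
  classical
  induction (Finset.univ : Finset (Fin m)) using Finset.induction_on with
  | empty => simpa using det_Baug_zero A g h i
  | insert _ _ hj ih =>
      rw [Finset.sum_insert hj, Finset.sum_insert hj, det_Baug_add, det_Baug_smul, ih]


/-- The cofactor minors in the expansion of `Baug` along its last row; independent of `i`. -/
noncomputable def Cmat (u : Fin n → R) (l : Fin (r+1)) : Matrix (Fin r) (Fin r) R :=
  Matrix.of fun k k' =>
    (Fin.snoc (fun l3 : Fin r => A (g k) (h l3)) (u (g k)) : Fin (r+1) → R) (l.succAbove k')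

lemma Baug_submatrix_last (u : Fin n → R) (i : Fin n) (l : Fin (r+1)) :
    (Baug A g h u i).submatrix (Fin.last r).succAbove l.succAbove = Cmat A g h u l := by
  ext k k'
  simp [Baug, Cmat, Matrix.submatrix_apply, Fin.succAbove_last_apply]

lemma Cmat_last (u : Fin n → R) :
    Cmat A g h u (Fin.last r) = A.submatrix g h := by
  ext k k'
  simp [Cmat, Fin.succAbove_last_apply]

/-- Laplace expansion of `det (Baug A g h u i)` along the last row. -/
lemma det_Baug_expand (u : Fin n → R) (i : Fin n) :
    (Baug A g h u i).det =
      (∑ l : Fin r, (-1) ^ (r + (l : ℕ)) * A i (h l) *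
        (Cmat A g h u (Fin.castSucc l)).det) + u i * (A.submatrix g h).det := by
  rw [Matrix.det_succ_row (Baug A g h u i) (Fin.last r)]
  rw [Fin.sum_univ_castSucc]
  congr 1
  · refine Finset.sum_congr rfl fun l _ => ?_
    rw [Baug_submatrix_last]
    have e1 : ((Fin.last r : ℕ) + ((Fin.castSucc l) : ℕ)) = r + l := by simp
    have e2 : Baug A g h u i (Fin.last r) (Fin.castSucc l) = A i (h l) := by simp [Baug]
    rw [e1, e2]
  · rw [Baug_submatrix_last, Cmat_last]
    have h1 : (Baug A g h u i) (Fin.last r) (Fin.last r) = u i := by simp [Baug]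
    rw [h1]
    have h2 : (-1 : R) ^ ((Fin.last r : ℕ) + (Fin.last r : ℕ)) = 1 :=
      Even.neg_one_pow ⟨r, by simp [Fin.val_last]⟩
    rw [h2]
    ring

lemma snoc_inj {N : ℕ} {g : Fin r → Fin N} (hg : Injective g) {i : Fin N}
    (hi : ∀ k, g k ≠ i) : Injective (rowExt g i) := by
  intro a b hab
  induction a using Fin.lastCases with
  | last =>
    induction b using Fin.lastCases with
    | last => rfl
    | cast b => rw [rowExt_last, rowExt_castSucc] at hab; exact absurd hab.symm (hi b)
  | cast a =>
    induction b using Fin.lastCases with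
    | last => rw [rowExt_last, rowExt_castSucc] at hab; exact absurd hab (hi a)
    | cast b => rw [rowExt_castSucc, rowExt_castSucc] at hab; rw [hg hab]

lemma det_Baug_col_mem (hg : Injective g) (hh : Injective h) (j : Fin m) (i : Fin n) :
    (Baug A g h (fun i' => A i' j) i).det ∈ minorsIdeal A (r+1) := by
  by_cases hi : ∃ k, g k = i
  · obtain ⟨k, hk⟩ := hi
    rw [Matrix.det_zero_of_row_eq (Fin.castSucc_lt_last k).ne
      (funext fun l => by simp [Baug, hk])]
    exact zero_mem _
  · by_cases hj : ∃ l, h l = j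
    · obtain ⟨l, hl⟩ := hj
      rw [Matrix.det_zero_of_column_eq (Fin.castSucc_lt_last l).ne
        (fun k => by simp [Baug, hl])]
      exact zero_mem _
    · push_neg at hi hj
      have hB : Baug A g h (fun i' => A i' j) i
          = A.submatrix (rowExt g i) (rowExt h j) := by
        ext k l
        induction l using Fin.lastCases with
        | last => simp [Baug]
        | cast l => simp [Baug]
      rw [hB]
      exact Ideal.subset_span ⟨⟨rowExt g i, rowExt h j⟩, ⟨snoc_inj hg hi, snoc_inj hh hj⟩, rfl⟩


lemma pi_mem_of_coords {S : Type*} [CommRing S] [Algebra R S] {n : ℕ}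
    (π : (Fin n → R) →ₗ[R] S) {q : Ideal S} {p : Ideal R}
    (hpq : ∀ a ∈ p, algebraMap R S a ∈ q)
    (x : Fin n → R) (hx : ∀ j, x j ∈ p) : π x ∈ q := by
  have hxe : π x = ∑ j, x j • π (fun j' => if j = j' then 1 else 0) := by
    conv_lhs => rw [pi_eq_sum_univ x]
    rw [map_sum]
    simp only [_root_.map_smul]
  rw [hxe]
  exact Ideal.sum_mem _ fun j _ => by
    rw [Algebra.smul_def]; exact Ideal.mul_mem_right _ _ (hpq _ (hx j))

lemma claim2 {S : Type*} [CommRing S] [Algebra R S] {n m : ℕ}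
    (A : Matrix (Fin n) (Fin m) R) (π : (Fin n → R) →ₗ[R] S) (hπ : Surjective π)
    {J : Ideal S}
    (hKer : Submodule.comap π (J.restrictScalars R)
      = Submodule.span R (Set.range fun j i => A i j))
    {q : Ideal S} (hq : q ∈ J.minimalPrimes) {r : ℕ}
    {g : Fin r → Fin n} {h : Fin r → Fin m} (hg : Injective g) (hh : Injective h)
    (hδ : (A.submatrix g h).det ∉ q.comap (algebraMap R S))
    (hm : minorsIdeal A (r+1) ≤ q.comap (algebraMap R S)) :
    q.comap (algebraMap R S) ∈ (minorsIdeal A (r+1)).minimalPrimes := by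
  haveI hqp : q.IsPrime := hq.1.1
  set f := algebraMap R S with hf
  set p := q.comap f with hp
  haveI hpP : p.IsPrime := Ideal.IsPrime.comap f
  refine ⟨⟨hpP, hm⟩, ?_⟩
  rintro p' ⟨hp', hIp'⟩ hp'le
  by_cases hcs : ∃ c s, c ∉ p' ∧ s ∉ q ∧ f c * s ∈ J
  · exfalso
    obtain ⟨c, s, hc, hs, hcsJ⟩ := hcs
    obtain ⟨v, hv⟩ := hπ s
    have hmem : c • v ∈ Submodule.comap π (J.restrictScalars R) := by
      show π (c • v) ∈ J
      rw [_root_.map_smul, hv, Algebra.smul_def]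
      exact hcsJ
    rw [hKer] at hmem
    obtain ⟨w₀, hw₀⟩ := (Submodule.mem_span_range_iff_exists_fun R).mp hmem
    have hDp' : ∀ i, (Baug A g h v i).det ∈ p' := by
      intro i
      have h1 : c * (Baug A g h v i).det
          = ∑ j, w₀ j * (Baug A g h (fun i' => A i' j) i).det := by
        rw [← det_Baug_smul, ← hw₀, det_Baug_sum]
      have h2 : c * (Baug A g h v i).det ∈ p' := by
        rw [h1]
        exact Ideal.sum_mem _ fun j _ =>
          Ideal.mul_mem_left _ _ (hIp' (det_Baug_col_mem A g h hg hh j i))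
      rcases hp'.mem_or_mem h2 with h3 | h3
      · exact absurd h3 hc
      · exact h3
    have hid : ∀ i, (A.submatrix g h).det * v i
        = (Baug A g h v i).det
          - ∑ l : Fin r,
              ((-1) ^ (r + (l : ℕ)) * (Cmat A g h v (Fin.castSucc l)).det) * A i (h l) := by
      intro i
      have hex := det_Baug_expand A g h v i
      have hsum : (∑ l : Fin r, (-1) ^ (r + (l : ℕ)) * A i (h l) *
            (Cmat A g h v (Fin.castSucc l)).det)
          = ∑ l : Fin r,
              ((-1) ^ (r + (l : ℕ)) * (Cmat A g h v (Fin.castSucc l)).det) * A i (h l) :=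
        Finset.sum_congr rfl fun l _ => by ring
      rw [hex, hsum]
      ring
    set δ := (A.submatrix g h).det with hδdef
    set E : Fin r → R :=
      fun l => (-1) ^ (r + (l : ℕ)) * (Cmat A g h v (Fin.castSucc l)).det with hE
    have hvid : (δ • v) = (fun i => (Baug A g h v i).det)
        - ∑ l, E l • (fun i => A i (h l)) := by
      funext i
      simp only [Pi.sub_apply, Pi.smul_apply, smul_eq_mul, Finset.sum_apply]
      rw [hid i]
    have hvecs : δ • s = π (fun i => (Baug A g h v i).det)
        - ∑ l, E l • π (fun i => A i (h l)) := by
      calc δ • s = π (δ • v) := by rw [_root_.map_smul, hv]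
        _ = _ := by rw [hvid, map_sub, map_sum]; simp only [_root_.map_smul]
    have hq1 : π (fun i => (Baug A g h v i).det) ∈ q :=
      pi_mem_of_coords π (fun a ha => Ideal.mem_comap.mp ha) _
        (fun i => hp'le (hDp' i))
    have hq2 : ∀ l : Fin r, π (fun i => A i (h l)) ∈ J := by
      intro l
      have : (fun i => A i (h l)) ∈ Submodule.comap π (J.restrictScalars R) := by
        rw [hKer]
        exact Submodule.subset_span ⟨h l, rfl⟩
      exact this
    have hδs : δ • s ∈ q := by
      rw [hvecs]
      refine Submodule.sub_mem _ hq1 (Ideal.sum_mem _ fun l _ => ?_)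
      rw [Algebra.smul_def]
      exact Ideal.mul_mem_left _ _ (hq.1.2 (hq2 l))
    rw [Algebra.smul_def] at hδs
    rcases hqp.mem_or_mem hδs with h' | h'
    · exact hδ (Ideal.mem_comap.mpr h')
    · exact hs h'
  · push_neg at hcs
    have h1p' : (1 : R) ∉ p' := (Ideal.ne_top_iff_one p').mp hp'.ne_top
    have h1q : (1 : S) ∉ q := (Ideal.ne_top_iff_one q).mp hqp.ne_top
    let W : Submonoid S :=
      { carrier := {x | ∃ c s, c ∉ p' ∧ s ∉ q ∧ x = f c * s}
        mul_mem' := by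
          rintro x y ⟨c1, s1, hc1, hs1, rfl⟩ ⟨c2, s2, hc2, hs2, rfl⟩
          refine ⟨c1 * c2, s1 * s2, fun hmm => (hp'.mem_or_mem hmm).elim hc1 hc2,
            fun hmm => (hqp.mem_or_mem hmm).elim hs1 hs2, ?_⟩
          rw [_root_.map_mul]; ring
        one_mem' := ⟨1, 1, h1p', h1q, by simp⟩ }
    have hdis : Disjoint (J : Set S) (W : Set S) := by
      rw [Set.disjoint_left]
      rintro x hx ⟨c, s, hc, hs, rfl⟩
      exact hcs c s hc hs hx
    obtain ⟨q', hq'p, hJq', hdisj⟩ := Ideal.exists_le_prime_disjoint J W hdis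
    have hq'q : q' ≤ q := by
      intro x hx
      by_contra hxq
      exact Set.disjoint_left.mp hdisj hx ⟨1, x, h1p', hxq, by simp⟩
    have hqeq : q ≤ q' := hq.2 ⟨hq'p, hJq'⟩ hq'q
    intro a ha
    by_contra hap'
    exact Set.disjoint_left.mp hdisj (hqeq (Ideal.mem_comap.mp ha))
      ⟨a, 1, hap', h1q, (mul_one _).symm⟩


lemma claim1 {S : Type*} [CommRing S] [Algebra R S] {n : ℕ}
    (π : (Fin n → R) →ₗ[R] S) (hπ : Surjective π) (J : Ideal S) (p : Ideal R)
    (hp : p.IsPrime) :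
    {q : Ideal S | q ∈ J.minimalPrimes ∧ q.comap (algebraMap R S) = p}.Finite := by
  classical
  set f := algebraMap R S with hf
  by_contra hinf
  have hinf : {q : Ideal S | q ∈ J.minimalPrimes ∧ q.comap (algebraMap R S) = p}.Infinite :=
    hinf
  set emb := Set.Infinite.natEmbedding _ hinf with hemb
  set Q : Fin (n+1) → Ideal S := fun i => (emb (i : ℕ) : Ideal S) with hQdef
  have hQmem : ∀ i, Q i ∈ J.minimalPrimes ∧ (Q i).comap f = p := fun i => (emb (i : ℕ)).2
  have hQprime : ∀ i, (Q i).IsPrime := fun i => (hQmem i).1.1.1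
  have hQinj : Injective Q := by
    intro i j hij
    have := emb.injective (Subtype.ext hij)
    exact Fin.val_injective this
  have hinc : ∀ i j : Fin (n+1), i ≠ j → ¬ (Q j ≤ Q i) := by
    intro i j hij hle
    have h1 : Q i ≤ Q j := (hQmem i).1.2 ⟨(hQmem j).1.1.1, (hQmem j).1.1.2⟩ hle
    exact hij (hQinj (le_antisymm h1 hle))
  have hxex : ∀ i j : Fin (n+1), ∃ x, i ≠ j → (x ∈ Q j ∧ x ∉ Q i) := by
    intro i j
    by_cases hij : i = j
    · exact ⟨0, fun h' => absurd hij h'⟩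
    · obtain ⟨x, hx1, hx2⟩ := SetLike.not_le_iff_exists.mp (hinc i j hij)
      exact ⟨x, fun _ => ⟨hx1, hx2⟩⟩
  choose x hxs using hxex
  set t : Fin (n+1) → S := fun i => ∏ j ∈ Finset.univ.erase i, x i j with htdef
  have htn : ∀ i, t i ∉ Q i := by
    intro i
    haveI := hQprime i
    exact Submonoid.prod_mem (Q i).primeCompl
      (fun j hj => (hxs i j (Finset.ne_of_mem_erase hj).symm).2)
  have htm : ∀ i j, i ≠ j → t i ∈ Q j := by
    intro i j hij
    obtain ⟨u, hu⟩ := Finset.dvd_prod_of_mem (x i)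
      (Finset.mem_erase.mpr ⟨hij.symm, Finset.mem_univ j⟩)
    rw [htdef]
    simp only []
    rw [hu]
    exact Ideal.mul_mem_right _ _ (hxs i j hij).1
  haveI hpP := hp
  set Rp := R ⧸ p with hRp
  set F := FractionRing Rp with hF
  set φ : R →+* F := (algebraMap Rp F).comp (Ideal.Quotient.mk p) with hφdef
  have hφ0 : ∀ a : R, φ a = 0 ↔ a ∈ p := by
    intro a
    rw [hφdef]
    simp only [RingHom.comp_apply, IsFractionRing.to_map_eq_zero_iff]
    exact Ideal.Quotient.eq_zero_iff_mem
  choose v hv using fun i => hπ (t i)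
  set V : Fin (n+1) → (Fin n → F) := fun i j => φ (v i j) with hVdef
  have hdep : ¬ LinearIndependent F V := by
    intro hli
    have hcard := hli.fintype_card_le_finrank
    rw [Module.finrank_pi] at hcard
    simp at hcard
  obtain ⟨lam, hlsum, i₀, hlam0⟩ := Fintype.not_linearIndependent_iff.mp hdep
  obtain ⟨b, hb⟩ := IsLocalization.exist_integer_multiples_of_finite
    (nonZeroDivisors Rp) lam
  choose β hβ using hb
  choose a ha using fun i => Ideal.Quotient.mk_surjective (I := p) (β i)
  have hbne : algebraMap Rp F (b : Rp) ≠ 0 :=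
    IsFractionRing.to_map_ne_zero_of_mem_nonZeroDivisors b.2
  have hai₀ : a i₀ ∉ p := by
    intro hmem
    have hβ0 : β i₀ = 0 := by
      rw [← ha i₀, Ideal.Quotient.eq_zero_iff_mem]
      exact hmem
    have h0 : (b : Rp) • lam i₀ = 0 := by rw [← hβ i₀, hβ0, map_zero]
    rw [Algebra.smul_def] at h0
    rcases mul_eq_zero.mp h0 with h' | h'
    · exact hbne h'
    · exact hlam0 h'
  have hφa : ∀ i, φ (a i) = algebraMap Rp F (b : Rp) * lam i := by
    intro i
    show (algebraMap Rp F) (Ideal.Quotient.mk p (a i)) = _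
    rw [ha i, hβ i, Algebra.smul_def]
  have hcoord : ∀ jj : Fin n, (∑ i, a i * v i jj) ∈ p := by
    intro jj
    rw [← hφ0, map_sum]
    have hterm : ∀ i : Fin (n+1),
        φ (a i * v i jj) = algebraMap Rp F (b : Rp) * (lam i * V i jj) := by
      intro i
      rw [_root_.map_mul, hφa i]
      have : V i jj = φ (v i jj) := rfl
      rw [← this]
      ring
    rw [Finset.sum_congr rfl (fun i _ => hterm i), ← Finset.mul_sum]
    have hz : (∑ i, lam i * V i jj) = 0 := by
      have hcf := congrFun hlsum jj
      simpa using hcf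
    rw [hz, mul_zero]
  have hfin : π (∑ i, a i • v i) = ∑ i, a i • t i := by
    rw [map_sum]
    simp only [_root_.map_smul]
    simp_rw [hv]
  have hπmem : π (∑ i, a i • v i) ∈ Q i₀ := by
    refine pi_mem_of_coords π (p := p)
      (fun aa haa => Ideal.mem_comap.mp (((hQmem i₀).2).symm ▸ haa)) _ (fun jj => ?_)
    have : (∑ i, a i • v i) jj = ∑ i, a i * v i jj := by
      simp [Finset.sum_apply]
    rw [this]
    exact hcoord jj
  rw [hfin] at hπmem
  have hsplit : a i₀ • t i₀ = (∑ i, a i • t i) - ∑ i ∈ Finset.univ.erase i₀, a i • t i := by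
    rw [← Finset.add_sum_erase _ _ (Finset.mem_univ i₀)]
    ring
  have hrest : (∑ i ∈ Finset.univ.erase i₀, a i • t i) ∈ Q i₀ :=
    Ideal.sum_mem _ fun i hi => by
      rw [Algebra.smul_def]
      exact Ideal.mul_mem_left _ _ (htm i i₀ (Finset.ne_of_mem_erase hi))
  have hfinal : a i₀ • t i₀ ∈ Q i₀ := by
    rw [hsplit]
    exact Submodule.sub_mem _ hπmem hrest
  rw [Algebra.smul_def] at hfinal
  rcases (hQprime i₀).mem_or_mem hfinal with h' | h'
  · exact hai₀ (by rw [← (hQmem i₀).2]; exact Ideal.mem_comap.mpr h')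
  · exact htn i₀ h'


lemma restrictScalars_fg {S : Type*} [CommRing S] [Algebra R S] [Module.Finite R S]
    {J : Ideal S} (hJ : J.FG) : (J.restrictScalars R).FG := by
  classical
  obtain ⟨sJ, hsJ⟩ := hJ
  obtain ⟨T, hT⟩ := Module.Finite.fg_top (R := R) (M := S)
  refine ⟨Finset.image₂ (fun b a => b * a) T sJ, le_antisymm ?_ ?_⟩
  · rw [Submodule.span_le]
    intro z hz
    simp only [Finset.coe_image₂, Set.mem_image2] at hz
    obtain ⟨b, hb, a, ha, rfl⟩ := hz
    show b * a ∈ J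
    exact Ideal.mul_mem_left _ _ (hsJ ▸ Ideal.subset_span ha)
  · intro z hz
    have hzJ : z ∈ Ideal.span (↑sJ : Set S) := by rw [hsJ]; exact hz
    set W := Submodule.span R ((Finset.image₂ (fun b a => b * a) T sJ : Finset S) : Set S)
      with hW
    clear hz
    have key : ∀ c : S, c * z ∈ W := by
      induction hzJ using Submodule.span_induction with
      | mem a ha =>
        intro c
        have hc : c ∈ Submodule.span R (T : Set S) := by rw [hT]; trivial
        induction hc using Submodule.span_induction with
        | mem b hb =>
          exact Submodule.subset_span
            (by simp only [Finset.coe_image₂]; exact Set.mem_image2_of_mem hb ha)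
        | zero => rw [zero_mul]; exact zero_mem _
        | add c1 c2 _ _ h1 h2 => rw [add_mul]; exact add_mem h1 h2
        | smul r c' _ h1 => rw [smul_mul_assoc]; exact Submodule.smul_mem _ _ h1
      | zero => intro c; rw [mul_zero]; exact zero_mem _
      | add x1 x2 _ _ h1 h2 => intro c; rw [mul_add]; exact add_mem (h1 c) (h2 c)
      | smul c' x' _ h1 =>
        intro c
        rw [smul_eq_mul, show c * (c' * x') = (c * c') * x' by ring]
        exact h1 (c * c')
    have := key 1
    rwa [one_mul] at this

end FGFCAux

open FGFCAux Function in
theorem main_aux {R S : Type*} [CommRing R] [CommRing S] [Algebra R S]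
    [Module.FinitePresentation R S]
    (hR : ∀ I : Ideal R, I.FG → I.minimalPrimes.Finite)
    (J : Ideal S) (hJ : J.FG) : J.minimalPrimes.Finite := by
  classical
  obtain ⟨n, π, hπ⟩ := Module.Finite.exists_fin' R S
  have hker : (LinearMap.ker π).FG := Module.FinitePresentation.fg_ker π hπ
  have hJR : (J.restrictScalars R).FG := restrictScalars_fg hJ
  have hK'fg : (Submodule.comap π (J.restrictScalars R)).FG := by
    apply Submodule.fg_of_fg_map_of_fg_inf_ker π
    · rw [Submodule.map_comap_eq_of_surjective hπ]
      exact hJR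
    · have heq : Submodule.comap π (J.restrictScalars R) ⊓ LinearMap.ker π
          = LinearMap.ker π := by
        rw [inf_eq_right]
        intro x hx
        have hx0 : π x = 0 := hx
        show π x ∈ J
        rw [hx0]; exact zero_mem _
      rw [heq]
      exact hker
  obtain ⟨T, hT⟩ := hK'fg
  set m := T.card with hm
  set col : Fin m → (Fin n → R) := fun j => ((T.equivFin.symm j : ↥T) : Fin n → R)
    with hcol
  have hcolrange : Set.range col = (T : Set (Fin n → R)) := by
    ext y
    constructor
    · rintro ⟨j, rfl⟩
      exact (T.equivFin.symm j).2
    · intro hy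
      exact ⟨T.equivFin ⟨y, hy⟩, by simp [hcol]⟩
  set A : Matrix (Fin n) (Fin m) R := Matrix.of fun i j => col j i with hA
  have hKer : Submodule.comap π (J.restrictScalars R)
      = Submodule.span R (Set.range fun j i => A i j) := by
    rw [← hT]
    congr 1
    rw [show (fun j i => A i j) = col from rfl, hcolrange]
  have hsub : J.minimalPrimes ⊆
      ⋃ (k : Fin (n+2)), ⋃ p ∈ (minorsIdeal A (k : ℕ)).minimalPrimes,
        {q : Ideal S | q ∈ J.minimalPrimes ∧ q.comap (algebraMap R S) = p} := by
    intro q hq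
    haveI hqP : q.IsPrime := hq.1.1
    set p := q.comap (algebraMap R S) with hp
    haveI hpP : p.IsPrime := Ideal.IsPrime.comap _
    set P : ℕ → Prop := fun k => ∃ gh : (Fin k → Fin n) × (Fin k → Fin m),
      Injective gh.1 ∧ Injective gh.2 ∧ (A.submatrix gh.1 gh.2).det ∉ p with hP
    have hP0 : P 0 := by
      refine ⟨⟨fun i => i.elim0, fun i => i.elim0⟩, fun a => a.elim0, fun a => a.elim0, ?_⟩
      rw [Matrix.det_isEmpty]
      exact (Ideal.ne_top_iff_one p).mp hpP.ne_top
    have hPn : ¬ P (n+1) := by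
      rintro ⟨⟨g, h⟩, hg, -, -⟩
      have := Fintype.card_le_of_injective g hg
      simp at this
    have hex : ∃ k, ¬ P (k+1) := ⟨n, hPn⟩
    set r := Nat.find hex with hr
    have hrn : r ≤ n := Nat.find_le hPn
    have hPr : P r := by
      rcases Nat.eq_zero_or_pos r with h0 | hpos
      · rw [h0]; exact hP0
      · have hmin := Nat.find_min hex (show r - 1 < r by omega)
        rw [not_not] at hmin
        have he : r - 1 + 1 = r := by omega
        rwa [he] at hmin
    have hmle : minorsIdeal A (r+1) ≤ p := by
      rw [minorsIdeal, Ideal.span_le]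
      rintro _ ⟨⟨g, h⟩, ⟨hg, hh⟩, rfl⟩
      by_contra hnot
      exact (Nat.find_spec hex) ⟨⟨g, h⟩, hg, hh, hnot⟩
    obtain ⟨⟨g, h⟩, hg, hh, hδ⟩ := hPr
    have hp2 := claim2 A π hπ hKer hq hg hh hδ hmle
    exact Set.mem_iUnion.mpr ⟨⟨r+1, by omega⟩,
      Set.mem_iUnion₂.mpr ⟨p, hp2, ⟨hq, rfl⟩⟩⟩
  refine Set.Finite.subset (Set.finite_iUnion fun (k : Fin (n+2)) => ?_) hsub
  refine Set.Finite.biUnion (hR _ (minorsIdeal_fg A (k : ℕ))) fun p hp => ?_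
  exact claim1 π hπ J p hp.1.1

def IsFGFC (R : Type*) [CommRing R] : Prop :=
  ∀ I : Ideal R, I.FG → I.minimalPrimes.Finite

theorem stmt_13 {R S : Type*} [CommRing R] [CommRing S] [Algebra R S]
    [Module.FinitePresentation R S] (hR : IsFGFC R) : IsFGFC S := by
  intro J hJ
  exact main_aux hR J hJ
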